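/- For every real α > 2 there exists a sequence of rationals β_1 < β_2 < ⋯ converging to α and an increasing (under the prefix order) sequence of finite binary words w_1, w_2, … such that each w_n is α-power-free and contains, for each i ≤ n, a factor which is a β_i-power. -/

import Mathlib

/-- Thue-Morse bit: parity of binary digit sum. -/
def tmSeq (n : ℕ) : Bool :=
  if h : n = 0 then false
  else xor (n % 2 == 1) (tmSeq (n / 2))
decreasing_by exact Nat.div_lt_self (Nat.pos_of_ne_zero h) one_lt_two

lemma tm_zero : tmSeq 0 = false := by simp [tmSeq]

lemma tm_even (n : ℕ) : tmSeq (2 * n) = tmSeq n := by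
  rcases Nat.eq_zero_or_pos n with h | h
  · simp [h]
  · rw [tmSeq]
    have h0 : ¬(2 * n = 0) := by omega
    rw [dif_neg h0]
    have h2 : 2 * n % 2 = 0 := by omega
    have h3 : 2 * n / 2 = n := by omega
    rw [h2, h3]
    cases tmSeq n <;> rfl

lemma tm_odd (n : ℕ) : tmSeq (2 * n + 1) = !tmSeq n := by
  rw [tmSeq]
  have : 2 * n + 1 ≠ 0 := by omega
  simp only [this, dif_neg, ne_eq, not_false_iff]
  have h2 : (2 * n + 1) % 2 = 1 := by omega
  have h3 : (2 * n + 1) / 2 = n := by omega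
  rw [h2, h3]
  cases tmSeq n <;> rfl

lemma tm_one : tmSeq 1 = true := by
  have := tm_odd 0; simpa [tm_zero] using this

/-- doubling operator: `Dop g` is the mu-image of the infinite word g. -/
def Dop (g : ℕ → Bool) : ℕ → Bool := fun p => if p % 2 = 0 then g (p / 2) else !g (p / 2)

lemma Dop_even (g : ℕ → Bool) (k : ℕ) : Dop g (2 * k) = g k := by
  have h1 : 2 * k % 2 = 0 := by omega
  have h2 : 2 * k / 2 = k := by omega
  simp [Dop, h1, h2]

lemma Dop_odd (g : ℕ → Bool) (k : ℕ) : Dop g (2 * k + 1) = !g k := by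
  have h1 : (2 * k + 1) % 2 = 1 := by omega
  have h2 : (2 * k + 1) / 2 = k := by omega
  simp [Dop, h1, h2]

/-- no three equal consecutive letters in a mu-image. -/
lemma no3 (g : ℕ → Bool) (k : ℕ) :
    ¬(Dop g k = Dop g (k + 1) ∧ Dop g (k + 1) = Dop g (k + 2)) := by
  rintro ⟨h1, h2⟩
  rcases Nat.even_or_odd k with ⟨m, hm⟩ | ⟨m, hm⟩
  · have hk : k = 2 * m := by omega
    rw [hk, show 2 * m + 1 = 2 * m + 1 from rfl, Dop_even, Dop_odd] at h1
    simp at h1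
  · have hk1 : k + 1 = 2 * (m + 1) := by omega
    have hk2 : k + 2 = 2 * (m + 1) + 1 := by omega
    rw [hk1, hk2, Dop_even, Dop_odd] at h2
    simp at h2

/-- `Win f i n q`: positions `[i, i+n)` of `f` are `q`-periodic. -/
def Win (f : ℕ → Bool) (i n q : ℕ) : Prop :=
  ∀ j, i ≤ j → j + q < i + n → f j = f (j + q)

lemma Win.congr {f f' : ℕ → Bool} {i n q : ℕ} (hw : Win f i n q)
    (h : ∀ j, i ≤ j → j < i + n → f j = f' j) : Win f' i n q := by
  intro j hj hjq
  rw [← h j hj (by omega), ← h (j + q) (by omega) (by omega)]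
  exact hw j hj hjq

/-- padding with `a` zeros on the left. -/
def zpad (a : ℕ) (g : ℕ → Bool) : ℕ → Bool := fun p => if p < a then false else g (p - a)

lemma Dop_iter (s : ℕ) (g : ℕ → Bool) (p : ℕ) :
    Dop^[s] g p = xor (tmSeq (p % 2 ^ s)) (g (p / 2 ^ s)) := by
  induction s generalizing g p with
  | zero => simp [tm_zero, Nat.mod_one]
  | succ s ih =>
    rw [Function.iterate_succ_apply', ]
    rcases Nat.even_or_odd p with ⟨m, hm⟩ | ⟨m, hm⟩
    · have hp : p = 2 * m := by omega
      subst hp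
      rw [Dop_even, ih]
      have h1 : 2 * m % 2 ^ (s + 1) = 2 * (m % 2 ^ s) := by
        rw [pow_succ, Nat.mul_comm (2^s) 2, Nat.mul_mod_mul_left]
      have h2 : 2 * m / 2 ^ (s + 1) = m / 2 ^ s := by
        rw [pow_succ, Nat.mul_comm (2^s) 2, ← Nat.div_div_eq_div_mul,
          Nat.mul_div_cancel_left _ (by norm_num : (0:ℕ) < 2)]
      rw [h1, h2, tm_even]
    · subst hm
      rw [Dop_odd, ih]
      have hK : 0 < 2 ^ s := pow_pos (by norm_num) s
      have hm1 : m % 2 ^ s < 2 ^ s := Nat.mod_lt _ hK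
      have hm2 : m = 2 ^ s * (m / 2 ^ s) + m % 2 ^ s := (Nat.div_add_mod m (2^s)).symm ▸ by
        omega
      have hsplit : 2 * m + 1 = 2 ^ (s + 1) * (m / 2 ^ s) + (2 * (m % 2 ^ s) + 1) := by
        rw [pow_succ]
        nlinarith [Nat.div_add_mod m (2 ^ s)]
      have h1 : (2 * m + 1) % 2 ^ (s + 1) = 2 * (m % 2 ^ s) + 1 := by
        conv_lhs => rw [hsplit]
        rw [Nat.mul_add_mod]
        exact Nat.mod_eq_of_lt (by rw [pow_succ]; omega)
      have h2 : (2 * m + 1) / 2 ^ (s + 1) = m / 2 ^ s := by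
        conv_lhs => rw [hsplit]
        rw [Nat.mul_add_div (by positivity)]
        have : (2 * (m % 2 ^ s) + 1) / 2 ^ (s + 1) = 0 := Nat.div_eq_of_lt (by rw [pow_succ]; omega)
        omega
      rw [h1, h2, tm_odd]
      cases tmSeq (m % 2 ^ s) <;> cases g (m / 2 ^ s) <;> rfl

/-- even-period pullback through mu. -/
lemma evenPull (g : ℕ → Bool) (q' i n : ℕ) (hn : 2 * q' < n)
    (hw : Win (Dop g) i n (2 * q')) :
    Win g (i / 2) ((i + n + 1) / 2 - i / 2) q' := by
  intro M hM hMq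
  have hMe : M + q' ≤ (i + n - 1) / 2 := by omega
  by_cases hx : i ≤ 2 * M
  · have e1 : Dop g (2 * M) = Dop g (2 * M + 2 * q') := by
      apply hw _ hx; omega
    rw [show 2 * M + 2 * q' = 2 * (M + q') by ring] at e1
    rwa [Dop_even, Dop_even] at e1
  · -- i = 2M + 1
    have hi : i = 2 * M + 1 := by omega
    have e1 : Dop g (2 * M + 1) = Dop g (2 * M + 1 + 2 * q') := by
      apply hw _ (by omega); omega
    rw [show 2 * M + 1 + 2 * q' = 2 * (M + q') + 1 by ring] at e1
    rw [Dop_odd, Dop_odd] at e1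
    simpa using e1

/-- odd-period pullback through mu: yields a constant run downstairs. -/
lemma oddPull (g : ℕ → Bool) (q i n : ℕ) (hodd : q % 2 = 1) (hn : 2 * q + 1 ≤ n)
    (hw : Win (Dop g) i n q) :
    ∀ M, i ≤ 2 * M + 1 → 2 * M + 3 ≤ i + n → g M = g (M + 1) := by
  intro M h1 h2
  set x := 2 * M + 1 with hxdef
  by_cases hc : x + q + 1 < i + n
  · have e1 : Dop g x = Dop g (x + q) := hw x h1 (by omega)
    have e2 : Dop g (x + 1) = Dop g (x + q + 1) := by
      have := hw (x + 1) (by omega) (by omega)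
      rwa [show x + 1 + q = x + q + 1 by omega] at this
    obtain ⟨y, hy⟩ : ∃ y, x + q = 2 * y := ⟨(x + q) / 2, by omega⟩
    rw [hy, Dop_even] at e1
    rw [show x + q + 1 = 2 * y + 1 by omega, Dop_odd] at e2
    rw [hxdef, Dop_odd] at e1
    rw [show x + 1 = 2 * (M + 1) by omega, Dop_even] at e2
    rw [e2, ← e1]
    simp
  · -- use j = x - q
    have hxq : q ≤ x := by omega
    have hge : i ≤ x - q := by omega
    obtain ⟨y, hy⟩ : ∃ y, x - q = 2 * y := ⟨(x - q) / 2, by omega⟩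
    have e1 : Dop g (x - q) = Dop g x := by
      have := hw (x - q) hge (by omega)
      rwa [show x - q + q = x by omega] at this
    have e2 : Dop g (x - q + 1) = Dop g (x + 1) := by
      have := hw (x - q + 1) (by omega) (by omega)
      rwa [show x - q + 1 + q = x + 1 by omega] at this
    rw [hy, Dop_even] at e1
    rw [hy, Dop_odd] at e2
    rw [hxdef, Dop_odd] at e1
    rw [show x + 1 = 2 * (M + 1) by omega, Dop_even] at e2
    rw [← e2, e1]
    simp

lemma Win_shift (g : ℕ → Bool) (a i n q : ℕ) (hi : a ≤ i) (hw : Win (zpad a g) i n q) :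
    Win g (i - a) n q := by
  intro j hj hjq
  have h := hw (j + a) (by omega) (by omega)
  have e1 : zpad a g (j + a) = g j := by simp [zpad, show ¬(j + a < a) by omega]
  have e2 : zpad a g (j + a + q) = g (j + q) := by
    simp [zpad, show ¬(j + a + q < a) by omega]
    congr 1; omega
  rw [e1, e2] at h
  exact h

lemma two_mul_lt {α : ℝ} (hα : 2 < α) {q n : ℕ} (hq : 1 ≤ q) (hn : α * q ≤ (n : ℝ)) :
    2 * q < n := by
  have hq' : (1 : ℝ) ≤ (q : ℝ) := by exact_mod_cast hq
  have : ((2 * q : ℕ) : ℝ) < (n : ℝ) := by push_cast; nlinarith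
  exact_mod_cast this

/-- Pure-periodic zone: no α-power with period < 2^s inside `mu^s(0^∞)`. -/
lemma per {α : ℝ} (hα : 2 < α) :
    ∀ s q i n, 1 ≤ q → q < 2 ^ s →
      Win (Dop^[s] (fun _ => false)) i n q → ¬(α * q ≤ (n : ℝ)) := by
  intro s
  induction s with
  | zero => intro q i n hq hqs _ _; simp at hqs; omega
  | succ s ih =>
    intro q i n hq hqs hw hn
    rw [Function.iterate_succ_apply'] at hw
    have h2q : 2 * q < n := two_mul_lt hα hq hn
    rcases Nat.even_or_odd q with ⟨q', hq'⟩ | ⟨q', hq'⟩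
    · -- even
      have hqq : q = 2 * q' := by omega
      subst hqq
      have hwin' := evenPull _ q' i n (by omega) hw
      refine ih q' (i / 2) ((i + n + 1) / 2 - i / 2) (by omega)
        (by rw [pow_succ] at hqs; omega) hwin' ?_
      have hlen : n ≤ 2 * ((i + n + 1) / 2 - i / 2) := by omega
      have : ((n : ℕ) : ℝ) ≤ 2 * (((i + n + 1) / 2 - i / 2 : ℕ) : ℝ) := by
        exact_mod_cast hlen
      push_cast at hn ⊢
      nlinarith
    · -- odd
      have hqq : q = 2 * q' + 1 := by omega
      rcases Nat.eq_or_lt_of_le hq with hq1 | hq3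
      · -- q = 1
        have hq1' : q = 1 := hq1.symm
        subst hq1'
        have e1 := hw i le_rfl (by omega)
        have e2 := hw (i + 1) (by omega) (by omega)
        exact no3 _ i ⟨e1, by rw [show i + 1 + 1 = i + 2 by omega] at e2; exact e2⟩
      · -- q ≥ 3 odd
        have hq3' : 3 ≤ q := by omega
        have hs1 : 1 ≤ s := by
          by_contra hs
          have : s = 0 := by omega
          subst this; simp at hqs; omega
      -- run in Dop^[s] cfalse
        obtain ⟨s', hs'⟩ : ∃ s', s = s' + 1 := ⟨s - 1, by omega⟩
        have hrun := oddPull _ q i n (by omega) (by omega) hw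
        set M := (i + 1) / 2 with hM
        have e1 : (Dop^[s] (fun _ => false)) M = (Dop^[s] (fun _ => false)) (M + 1) :=
          hrun M (by omega) (by omega)
        have e2 : (Dop^[s] (fun _ => false)) (M + 1) = (Dop^[s] (fun _ => false)) (M + 2) :=
          hrun (M + 1) (by omega) (by omega)
        rw [hs', Function.iterate_succ_apply'] at e1 e2
        exact no3 _ M ⟨e1, e2⟩

/-- word-level freeness predicates. -/
def FreeF (α : ℝ) (f : ℕ → Bool) (L : ℕ) : Prop :=
  ∀ i n q, 1 ≤ q → i + n ≤ L → Win f i n q → ¬(α * q ≤ (n : ℝ))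

def NoCrossF (α : ℝ) (f : ℕ → Bool) (L : ℕ) : Prop :=
  ∀ a n q, 1 ≤ a → 1 ≤ q → a < n → n - a ≤ L → Win (zpad a f) 0 n q → ¬(α * q ≤ (n : ℝ))

lemma cross {α : ℝ} (hα : 2 < α) (vf : ℕ → Bool) (L : ℕ)
    (hfree : FreeF α vf L) (hnc : NoCrossF α vf L) (hhead : 1 ≤ L → vf 0 = true) :
    ∀ s R q i n, 1 ≤ R → 1 ≤ q →
      Win (Dop^[s] (zpad R vf)) i n q → (α * q ≤ (n : ℝ)) →
      i + n ≤ 2 ^ s * (R + L) → R * 2 ^ s < i + n → False := by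
  intro s
  induction s with
  | zero =>
    intro R q i n hR hq hw hn h4 h5
    simp only [pow_zero, one_mul, Function.iterate_zero, id] at hw h4 h5
    rcases le_or_gt R i with hi | hi
    · have hwin := Win_shift vf R i n q hi hw
      exact hfree (i - R) n q hq (by omega) hwin hn
    · -- crossing
      have hwin : Win (zpad (R - i) vf) 0 n q := by
        intro j hj hjq
        have h := hw (i + j) (by omega) (by omega)
        have e1 : zpad R vf (i + j) = zpad (R - i) vf j := by
          simp only [zpad]
          by_cases hc : i + j < R
          · rw [if_pos hc, if_pos (by omega)]
          · rw [if_neg hc, if_neg (by omega)]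
            congr 1; omega
        have e2 : zpad R vf (i + j + q) = zpad (R - i) vf (j + q) := by
          simp only [zpad]
          by_cases hc : i + j + q < R
          · rw [if_pos (by omega), if_pos (by omega)]
          · rw [if_neg (by omega), if_neg (by omega)]
            congr 1; omega
        rw [e1, e2] at h
        exact h
      exact hnc (R - i) n q (by omega) hq (by omega) (by omega) hwin hn
  | succ s ih =>
    intro R q i n hR hq hw hn h4 h5
    rw [Function.iterate_succ_apply'] at hw
    have h2q : 2 * q < n := two_mul_lt hα hq hn
    have hKpos : 0 < 2 ^ s := pow_pos (by norm_num) s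
    have hpow : (2:ℕ) ^ (s+1) = 2 * 2 ^ s := by rw [pow_succ]; ring
    rcases Nat.even_or_odd q with ⟨q', hq'⟩ | ⟨q', hq'⟩
    · have hqq : q = 2 * q' := by omega
      subst hqq
      have hwin' := evenPull _ q' i n (by omega) hw
      refine ih R q' (i / 2) ((i + n + 1) / 2 - i / 2) hR (by omega) hwin' ?_ ?_ ?_
      · have hlen : n ≤ 2 * ((i + n + 1) / 2 - i / 2) := by omega
        have : ((n : ℕ) : ℝ) ≤ 2 * (((i + n + 1) / 2 - i / 2 : ℕ) : ℝ) := by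
          exact_mod_cast hlen
        push_cast at hn ⊢
        nlinarith
      · have h4' : i + n ≤ 2 * (2 ^ s * (R + L)) := by
          rw [hpow, mul_assoc] at h4; exact h4
        omega
      · have h5' : 2 * (R * 2 ^ s) < i + n := by
          rw [hpow] at h5; nlinarith
        omega
    · have hqq : q = 2 * q' + 1 := by omega
      rcases Nat.eq_or_lt_of_le hq with hq1 | hq3
      · have hq1' : q = 1 := hq1.symm
        subst hq1'
        have e1 := hw i le_rfl (by omega)
        have e2 := hw (i + 1) (by omega) (by omega)
        exact no3 _ i ⟨e1, by rw [show i + 1 + 1 = i + 2 by omega] at e2; exact e2⟩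
      · have hq3' : 3 ≤ q := by omega
        have hrun := oddPull _ q i n (by omega) (by omega) hw
        rcases Nat.eq_zero_or_pos s with hs0 | hs1
        · -- s = 0 : runs land in the word 0^R v itself
          subst hs0
          simp only [Function.iterate_zero, id] at hrun
          rw [pow_succ, pow_zero, one_mul] at h4 h5
          by_cases hi : i < 2 * R
          · have e := hrun (R - 1) (by omega) (by omega)
            have hL : 1 ≤ L := by omega
            rw [show R - 1 + 1 = R by omega] at e
            have z1 : zpad R vf (R - 1) = false := by
              simp only [zpad]; rw [if_pos (by omega)]
            have z2 : zpad R vf R = vf 0 := by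
              simp only [zpad]; rw [if_neg (by omega)]; congr 1; omega
            rw [z1, z2, hhead hL] at e
            exact Bool.false_ne_true e
          · -- run entirely inside v
            push_neg at hi
            have hMlo : 2 * (i / 2) + 1 ≥ i ∧ i / 2 ≥ R ∧ 2 * (i / 2) ≤ i := by omega
            set Mlo := i / 2 with hMlodef
            set Nrun := (i + n - 3) / 2 + 2 - Mlo with hNrun
            have hNr : 2 * ((i + n - 3) / 2) + 3 ≤ i + n ∧ (i + n - 3) / 2 + 2 ≥ Mlo := by
              rw [hMlodef]; omega
            have hwv : Win vf (Mlo - R) Nrun 1 := by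
              intro j hj hjq
              have e := hrun (j + R) (by omega) (by omega)
              have z1 : zpad R vf (j + R) = vf j := by
                simp [zpad, show ¬ (j + R < R) by omega]
              have z2 : zpad R vf (j + R + 1) = vf (j + 1) := by
                simp [zpad, show ¬ (j + R + 1 < R) by omega]
                congr 1; omega
              rw [z1] at e
              rw [show j + R + 1 = j + R + 1 from rfl] at e
              rw [z2] at e
              exact e
            refine hfree (Mlo - R) Nrun 1 le_rfl (by omega) hwv ?_
            have hlen : n ≤ 2 * Nrun := by omega
            have hcast : ((n : ℕ) : ℝ) ≤ 2 * ((Nrun : ℕ) : ℝ) := by exact_mod_cast hlen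
            have hq3r : (3 : ℝ) ≤ (q : ℝ) := by exact_mod_cast hq3'
            push_cast at hn ⊢
            nlinarith
        · -- s ≥ 1 : 3-run inside a mu-image
          obtain ⟨s', hs'⟩ : ∃ s', s = s' + 1 := ⟨s - 1, by omega⟩
          set M := (i + 1) / 2 with hM
          have e1 := hrun M (by omega) (by omega)
          have e2 := hrun (M + 1) (by omega) (by omega)
          rw [hs', Function.iterate_succ_apply'] at e1 e2
          exact no3 _ M ⟨e1, e2⟩

lemma tm_4j1 (j : ℕ) : tmSeq (4 * j + 1) = !tmSeq j := by
  rw [show 4 * j + 1 = 2 * (2 * j) + 1 by ring, tm_odd, tm_even]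

lemma tm_4j2 (j : ℕ) : tmSeq (4 * j + 2) = !tmSeq j := by
  rw [show 4 * j + 2 = 2 * (2 * j + 1) by ring, tm_even, tm_odd]

lemma tm_4j3 (j : ℕ) : tmSeq (4 * j + 3) = tmSeq j := by
  rw [show 4 * j + 3 = 2 * (2 * j + 1) + 1 by ring, tm_odd, tm_odd, Bool.not_not]

lemma tm_4j4 (j : ℕ) : tmSeq (4 * j + 4) = tmSeq (j + 1) := by
  rw [show 4 * j + 4 = 2 * (2 * (j + 1)) by ring, tm_even, tm_even]

lemma tm_4j6 (j : ℕ) : tmSeq (4 * j + 6) = !tmSeq (j + 1) := by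
  rw [show 4 * j + 6 = 2 * (2 * (j + 1) + 1) by ring, tm_even, tm_odd]

lemma Win_of_offset (f : ℕ → Bool) (c i n q : ℕ)
    (hw : Win (fun p => f (c + p)) i n q) : Win f (c + i) n q := by
  intro j hj hjq
  have := hw (j - c) (by omega) (by omega)
  simpa [show c + (j - c) = j by omega, show c + (j - c + q) = j + q by omega] using this

/-- The inductive construction step. -/
lemma step {α : ℝ} (hα : 2 < α) (vf : ℕ → Bool) (L : ℕ)
    (hfree : FreeF α vf L) (hnc : NoCrossF α vf L) (hhead : 1 ≤ L → vf 0 = true)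
    (R s t j : ℕ) (hR : 1 ≤ R) (hs : 2 ≤ s) (ht : t = 4 * j + 3) (htm : tmSeq j = true)
    (hts : t + 3 < 2 ^ s)
    (hmargin : ((R * 2 ^ s - t : ℕ) : ℝ) + 2 < α * 2 ^ s) :
    FreeF α (fun p => Dop^[s] (zpad R vf) (t + p)) (2 ^ s * (R + L) - t) ∧
    NoCrossF α (fun p => Dop^[s] (zpad R vf) (t + p)) (2 ^ s * (R + L) - t) ∧
    (fun p => Dop^[s] (zpad R vf) (t + p)) 0 = true := by
  have hKpos : 0 < 2 ^ s := pow_pos (by norm_num) s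
  have htR : t < R * 2 ^ s := by nlinarith [hts, hR, hKpos]
  set Yf := Dop^[s] (zpad R vf) with hYf
  -- letters in the periodic zone agree with the pure zone
  have hper_eq : ∀ p, p < R * 2 ^ s → Yf p = Dop^[s] (fun _ => false) p := by
    intro p hp
    rw [hYf, Dop_iter, Dop_iter]
    have hdiv : p / 2 ^ s < R := (Nat.div_lt_iff_lt_mul hKpos).2 hp
    simp [zpad, hdiv]
  -- letters near the start
  have hwtm : ∀ p, t + p < 2 ^ s → Yf (t + p) = tmSeq (t + p) := by
    intro p hp
    rw [hYf, Dop_iter]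
    have h1 : (t + p) % 2 ^ s = t + p := Nat.mod_eq_of_lt hp
    have h2 : (t + p) / 2 ^ s = 0 := Nat.div_eq_of_lt hp
    rw [h1, h2]
    have h3 : zpad R vf 0 = false := by
      unfold zpad; rw [if_pos (by omega)]
    rw [h3, Bool.xor_false]
  have hw0 : Yf t = true := by
    have := hwtm 0 (by omega)
    rw [Nat.add_zero] at this
    rw [this, ht, tm_4j3, htm]
  -- the α-ratio forbidden in pure zone or crossing zone
  have main : ∀ (R' i n q : ℕ), 1 ≤ R' → 1 ≤ q → (α * q ≤ (n : ℝ)) →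
      i + n ≤ 2 ^ s * (R' + L) →
      (i + n ≤ R' * 2 ^ s → (n : ℝ) < α * 2 ^ s) →
      Win (Dop^[s] (zpad R' vf)) i n q → False := by
    intro R' i n q hR' hq hn h4 hsmall hw
    rcases le_or_gt (i + n) (R' * 2 ^ s) with hzone | hzone
    · rcases lt_or_ge q (2 ^ s) with hqs | hqs
      · refine per hα s q i n hq hqs ?_ hn
        refine hw.congr (fun p hp1 hp2 => ?_)
        rw [Dop_iter, Dop_iter]
        have hdiv : p / 2 ^ s < R' := (Nat.div_lt_iff_lt_mul hKpos).2 (by omega)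
        simp [zpad, hdiv]
      · have hcast : ((2:ℕ) ^ s : ℝ) ≤ (q : ℝ) := by exact_mod_cast hqs
        have h1 : α * 2 ^ s ≤ α * q := by
          have hα0 : (0:ℝ) ≤ α := by linarith
          have := mul_le_mul_of_nonneg_left hcast hα0
          simpa using this
        have h2 := hsmall hzone
        linarith
    · exact cross hα vf L hfree hnc hhead s R' q i n hR' hq hw hn h4 hzone
  constructor
  · -- FreeF
    intro i0 n q hq hle hwin hn
    have hwY : Win Yf (t + i0) n q := Win_of_offset Yf t i0 n q hwin
    have haux : R * 2 ^ s ≤ 2 ^ s * (R + L) := by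
      rw [Nat.mul_comm]; exact Nat.mul_le_mul_left _ (by omega)
    refine main R (t + i0) n q hR hq hn (by omega) (fun hzone => ?_) hwY
    have hnat : n ≤ R * 2 ^ s - t := by omega
    have hcast : (n : ℝ) ≤ ((R * 2 ^ s - t : ℕ) : ℝ) := by exact_mod_cast hnat
    linarith
  refine ⟨?_, hw0⟩
  -- NoCrossF
  intro a n q ha hq han hle hwin hn
  have h2q : 2 * q < n := two_mul_lt hα hq hn
  set wf : ℕ → Bool := fun p => Yf (t + p) with hwfdef
  rcases le_or_gt q a with haq | haq
  · -- a ≥ q : the whole window is constant false, contradicting wf 0 = true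
    have hall : ∀ p, p < n → zpad a wf p = false := by
      intro p
      induction p using Nat.strong_induction_on with
      | _ p ih =>
        intro hp
        by_cases hpa : p < a
        · simp [zpad, hpa]
        · have h := (hwin (p - q) (by omega) (by omega)).symm
          rw [show p - q + q = p by omega] at h
          rw [h]
          exact ih (p - q) (by omega) (by omega)
    have h1 := hall a han
    have h2 : zpad a wf a = wf 0 := by
      simp [zpad, show ¬ (a < a) by omega]
    rw [h2] at h1
    rw [hwfdef] at h1
    simp only [Nat.add_zero] at h1
    rw [hw0] at h1
    simp at h1
  · -- a < q
    have hzero : ∀ k, k < a → wf (q - a + k) = false := by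
      intro k hk
      have h := hwin k (by omega) (by omega)
      have e1 : zpad a wf k = false := by simp [zpad, show k < a by omega]
      have e2 : zpad a wf (k + q) = wf (q - a + k) := by
        simp only [zpad]
        rw [if_neg (by omega)]
        congr 1; omega
      rw [e1, e2] at h
      exact h.symm
    rcases lt_or_ge q 3 with hq3 | hq3
    · -- q = 2, a = 1
      have hq2 : q = 2 ∧ a = 1 := by omega
      obtain ⟨hq2, ha1⟩ := hq2
      subst hq2; subst ha1
      have hwf1 : wf 1 = false := by
        have := hzero 0 (by omega); simpa using this
      have hwf3 : wf 3 = false := by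
        have h := hwin 2 (by omega) (by omega)
        have e1 : zpad 1 wf 2 = wf 1 := by simp [zpad]
        have e2 : zpad 1 wf (2 + 2) = wf 3 := by simp [zpad]
        rw [e1, e2] at h
        rw [← h]
        exact hwf1
      have t1 : wf 1 = tmSeq (j + 1) := by
        have := hwtm 1 (by omega)
        rw [hwfdef]; simp only []
        rw [this, ht, show 4 * j + 3 + 1 = 4 * j + 4 by omega, tm_4j4]
      have t3 : wf 3 = !tmSeq (j + 1) := by
        have := hwtm 3 (by omega)
        rw [hwfdef]; simp only []
        rw [this, ht, show 4 * j + 3 + 3 = 4 * j + 6 by omega, tm_4j6]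
      rw [t1] at hwf1
      rw [t3] at hwf3
      rw [hwf1] at hwf3
      simp at hwf3
    · rcases le_or_gt 3 a with ha3 | ha3
      · -- a ≥ 3 : three consecutive zeros in a mu-image, impossible
        have haq4 : 4 ≤ q := by omega
        have z0 := hzero (a - 3) (by omega)
        have z1 := hzero (a - 2) (by omega)
        have z2 := hzero (a - 1) (by omega)
        obtain ⟨s', hs'⟩ : ∃ s', s = s' + 1 := ⟨s - 1, by omega⟩
        set k := t + (q - a + (a - 3)) with hk
        have e0 : Yf k = false := z0
        have e1 : Yf (k + 1) = false := by
          rw [show k + 1 = t + (q - a + (a - 2)) by omega]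
          exact z1
        have e2 : Yf (k + 2) = false := by
          rw [show k + 2 = t + (q - a + (a - 1)) by omega]
          exact z2
        rw [hYf, hs', Function.iterate_succ_apply'] at e0 e1 e2
        exact no3 _ k ⟨e0.trans e1.symm, e1.trans e2.symm⟩
      · -- a ≤ 2, q ≥ 3 : embed into mu^s(0^(R+1) v)
        set ip := 2 ^ s + t - a with hip
        have hYshift : ∀ x, Dop^[s] (zpad (R + 1) vf) (2 ^ s + x) = Yf x := by
          intro x
          rw [hYf, Dop_iter, Dop_iter]
          have hmod : (2 ^ s + x) % 2 ^ s = x % 2 ^ s := by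
            rw [Nat.add_comm, Nat.add_mod_right]
          have hdiv : (2 ^ s + x) / 2 ^ s = x / 2 ^ s + 1 := by
            rw [Nat.add_comm, Nat.add_div_right _ hKpos]
          rw [hmod, hdiv]
          congr 1
          simp only [zpad]
          by_cases hc : x / 2 ^ s < R
          · rw [if_pos (by omega), if_pos (by omega)]
          · rw [if_neg (by omega), if_neg (by omega)]
            congr 1; omega
        have hweq : ∀ p, p < n → zpad a wf p = Dop^[s] (zpad (R + 1) vf) (ip + p) := by
          intro p hp
          by_cases hpa : p < a
          · have eL : zpad a wf p = false := by simp [zpad, hpa]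
            rw [eL]
            have hlt : t - a + p < 2 ^ s := by omega
            have e : Dop^[s] (zpad (R + 1) vf) (ip + p) = tmSeq (t - a + p) := by
              rw [show ip + p = 2 ^ s + (t - a + p) by omega]
              rw [hYshift, hYf, Dop_iter]
              have h1 : (t - a + p) % 2 ^ s = t - a + p := Nat.mod_eq_of_lt hlt
              have h2 : (t - a + p) / 2 ^ s = 0 := Nat.div_eq_of_lt hlt
              rw [h1, h2]
              have h3 : zpad R vf 0 = false := by
                simp only [zpad]; rw [if_pos (by omega)]
              rw [h3, Bool.xor_false]
            rw [e]
            -- tmSeq (t - a + p) = false for the two possible values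
            rcases (by omega : t - a + p = 4 * j + 1 ∨ t - a + p = 4 * j + 2) with hv | hv
            · rw [hv, tm_4j1, htm]; rfl
            · rw [hv, tm_4j2, htm]; rfl
          · have eL : zpad a wf p = wf (p - a) := by
              simp [zpad, hpa]
            rw [eL, hwfdef]
            simp only []
            rw [show ip + p = 2 ^ s + (t + (p - a)) by omega, hYshift]
        have hwY' : Win (Dop^[s] (zpad (R + 1) vf)) (ip + 0) n q := by
          apply Win_of_offset
          refine hwin.congr (fun p hp1 hp2 => ?_)
          exact hweq p (by omega)
        rw [Nat.add_zero] at hwY'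
        refine main (R + 1) ip n q (by omega) hq hn ?_ (fun hzone => ?_) hwY'
        · have : 2 ^ s * (R + 1 + L) = 2 ^ s + 2 ^ s * (R + L) := by ring
          omega
        · have hnat : n ≤ R * 2 ^ s - t + a := by
            have : (R + 1) * 2 ^ s = R * 2 ^ s + 2 ^ s := by ring
            omega
          have hcast : (n : ℝ) ≤ ((R * 2 ^ s - t : ℕ) : ℝ) + a := by
            have : ((n : ℕ) : ℝ) ≤ (((R * 2 ^ s - t) + a : ℕ) : ℝ) := by exact_mod_cast hnat
            push_cast at this ⊢
            linarith
          have ha2 : (a : ℝ) ≤ 2 := by exact_mod_cast (by omega : a ≤ 2)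
          linarith

lemma tm_hit (N : ℕ) : ∃ jj, N ≤ jj ∧ jj ≤ N + 2 ∧ tmSeq jj = true := by
  rcases Nat.even_or_odd N with ⟨k, hk⟩ | ⟨k, hk⟩
  · have hN : N = 2 * k := by omega
    cases htm : tmSeq k with
    | true => exact ⟨N, le_rfl, by omega, by rw [hN, tm_even]; exact htm⟩
    | false =>
      refine ⟨N + 1, by omega, by omega, ?_⟩
      rw [hN, tm_odd, htm]; rfl
  · have hN : N + 1 = 2 * (k + 1) := by omega
    cases htm : tmSeq (k + 1) with
    | true => exact ⟨N + 1, by omega, by omega, by rw [hN, tm_even]; exact htm⟩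
    | false =>
      refine ⟨N + 2, by omega, by omega, ?_⟩
      rw [show N + 2 = 2 * (k + 1) + 1 by omega, tm_odd, htm]; rfl

section Params

variable {α : ℝ} (hα : 2 < α)

/-- all the conditions a parameter triple must satisfy at stage m,
    relative to target interval (lo, hi). -/
def GoodParam (α : ℝ) (R : ℕ) (lo hi : ℝ) (s t jj : ℕ) : Prop :=
  2 ≤ s ∧ t = 4 * jj + 3 ∧ tmSeq jj = true ∧ t + 3 < 2 ^ s ∧
  ((R * 2 ^ s - t : ℕ) : ℝ) + 2 < α * 2 ^ s ∧
  lo < ((R * 2 ^ s - t : ℕ) : ℝ) / 2 ^ s ∧ ((R * 2 ^ s - t : ℕ) : ℝ) / 2 ^ s < hi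

set_option maxHeartbeats 1000000 in
lemma exists_good_param (R : ℕ) (hR1 : 1 ≤ R) (lo hi : ℝ)
    (hRα : α ≤ (R : ℝ)) (hlo : (R : ℝ) - 1 < lo) (hlohi : lo < hi) (hhiα : hi < α) :
    ∃ s t jj, GoodParam α R lo hi s t jj := by
  have hε : (0 : ℝ) < min (hi - lo) (min (α - hi) (lo - ((R : ℝ) - 1))) := by
    simp only [lt_min_iff]
    refine ⟨by linarith, by linarith, by linarith⟩
  set ε := min (hi - lo) (min (α - hi) (lo - ((R : ℝ) - 1))) with hεdef
  have hε1 : ε ≤ hi - lo := min_le_left _ _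
  have hε2 : ε ≤ α - hi := le_trans (min_le_right _ _) (min_le_left _ _)
  have hε3 : ε ≤ lo - ((R : ℝ) - 1) := le_trans (min_le_right _ _) (min_le_right _ _)
  obtain ⟨s0, hs0⟩ := pow_unbounded_of_one_lt (25 / ε) (by norm_num : (1:ℝ) < 2)
  set s := max s0 2 with hsdef
  have hs2 : 2 ≤ s := le_max_right _ _
  have h2s : (25 / ε) < 2 ^ s := by
    calc (25 / ε) < 2 ^ s0 := hs0
    _ ≤ 2 ^ s := by
      apply pow_le_pow_right₀ (by norm_num)
      exact le_max_left _ _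
  have hKpos : (0 : ℝ) < 2 ^ s := by positivity
  have h25 : 25 < ε * 2 ^ s := by
    rw [div_lt_iff₀ hε] at h2s
    linarith
  set loT := ((R : ℝ) - hi) * 2 ^ s with hloT
  have hloT0 : 0 ≤ loT := by
    rw [hloT]
    have h1 : (0:ℝ) ≤ (R : ℝ) - hi := by linarith
    positivity
  set n0 := Nat.floor loT with hn0
  have hn0le : (n0 : ℝ) ≤ loT := Nat.floor_le hloT0
  have hn0gt : loT < (n0 : ℝ) + 1 := Nat.lt_floor_add_one loT
  obtain ⟨jj, hj1, hj2, hjtm⟩ := tm_hit (n0 / 4 + 1)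
  obtain ⟨T, hTdef⟩ : ∃ T : ℕ, T = 4 * jj + 3 := ⟨_, rfl⟩
  have hT1 : n0 + 1 ≤ T := by omega
  have hT2 : T ≤ n0 + 18 := by omega
  have ht_lo : (n0 : ℝ) + 1 ≤ (T : ℝ) := by exact_mod_cast hT1
  have ht_hi : (T : ℝ) ≤ (n0 : ℝ) + 18 := by exact_mod_cast hT2
  have htlo : loT < (T : ℝ) := by linarith
  have hthi : (T : ℝ) < ((R : ℝ) - lo) * 2 ^ s := by
    have hexp : ((R : ℝ) - lo) * 2 ^ s ≥ loT + ε * 2 ^ s := by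
      rw [hloT]
      have := mul_le_mul_of_nonneg_right (show ε ≤ hi - lo by linarith) (le_of_lt hKpos)
      linarith [this]
    linarith
  have hts : (T : ℝ) + 3 < 2 ^ s := by
    have h1 : ((R : ℝ) - lo) * 2 ^ s ≤ (1 - ε) * 2 ^ s := by
      apply mul_le_mul_of_nonneg_right _ (le_of_lt hKpos)
      linarith
    have h2 : (1 - ε) * 2 ^ s = 2 ^ s - ε * 2 ^ s := by ring
    linarith
  have htsn : T + 3 < 2 ^ s := by
    have h2 : ((T + 3 : ℕ) : ℝ) < ((2 ^ s : ℕ) : ℝ) := by push_cast; linarith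
    exact_mod_cast h2
  have htR : (T : ℝ) < (R : ℝ) * 2 ^ s := by
    have h1 : (0:ℝ) ≤ lo * 2 ^ s := by
      apply mul_nonneg _ (le_of_lt hKpos)
      have : (1:ℝ) ≤ (R:ℝ) := by exact_mod_cast hR1
      linarith
    nlinarith [hthi]
  have htRn : T < R * 2 ^ s := by
    have h2 : ((T : ℕ) : ℝ) < ((R * 2 ^ s : ℕ) : ℝ) := by push_cast; linarith
    exact_mod_cast h2
  have hcast : ((R * 2 ^ s - T : ℕ) : ℝ) = (R : ℝ) * 2 ^ s - T := by
    have hle : T ≤ R * 2 ^ s := le_of_lt htRn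
    push_cast [hle]
    ring
  have hexp1 : (R : ℝ) * 2 ^ s - T < hi * 2 ^ s := by
    rw [hloT] at htlo
    nlinarith [htlo]
  have hexp2 : lo * 2 ^ s < (R : ℝ) * 2 ^ s - T := by
    nlinarith [hthi]
  refine ⟨s, T, jj, hs2, hTdef, hjtm, htsn, ?_, ?_, ?_⟩
  · rw [hcast]
    have h1 : hi * 2 ^ s ≤ (α - ε) * 2 ^ s := by
      apply mul_le_mul_of_nonneg_right _ (le_of_lt hKpos)
      linarith
    have h2 : (α - ε) * 2 ^ s = α * 2 ^ s - ε * 2 ^ s := by ring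
    linarith
  · rw [hcast, lt_div_iff₀ hKpos]
    linarith
  · rw [hcast, div_lt_iff₀ hKpos]
    linarith

end Params

/-- Thue–Morse morphism: 0 ↦ 01, 1 ↦ 10 (false = 0, true = 1). -/
def mu : List Bool → List Bool :=
  fun w => w.flatMap (fun b => if b then [true, false] else [false, true])

/-- `w` has period `p`: `w[i] = w[i+p]` whenever both defined. -/
def HasPeriod (w : List Bool) (p : ℕ) : Prop :=
  ∀ i, i + p < w.length → w[i]? = w[i + p]?

/-- `w` is α-power-free: no factor `u` has a period `p` with `|u|/p ≥ α`. -/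
def PowerFree (α : ℝ) (w : List Bool) : Prop :=
  ∀ u p, u <:+: w → 0 < p → HasPeriod u p → (u.length : ℝ) / p < α

/-- `𝓛`: factors of images of `mu`. -/
def InL (w : List Bool) : Prop := ∃ x, w <:+: mu x

lemma mu_nil : mu [] = [] := rfl

lemma mu_cons (b : Bool) (l : List Bool) :
    mu (b :: l) = (if b then [true, false] else [false, true]) ++ mu l := by
  simp [mu]

lemma mu_append (l₁ l₂ : List Bool) : mu (l₁ ++ l₂) = mu l₁ ++ mu l₂ := by
  simp [mu]

lemma mu_length (l : List Bool) : (mu l).length = 2 * l.length := by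
  induction l with
  | nil => rfl
  | cons b tl ih =>
    rw [mu_cons]
    cases b <;> simp [ih] <;> omega

lemma mu_cons2 (b : Bool) (l : List Bool) : mu (b :: l) = b :: ((!b) :: mu l) := by
  cases b <;> simp [mu_cons]

lemma mu_get_even (l : List Bool) (k : ℕ) : (mu l)[2 * k]? = l[k]? := by
  induction l generalizing k with
  | nil => simp [mu_nil]
  | cons b tl ih =>
    rw [mu_cons2]
    cases k with
    | zero => rfl
    | succ k =>
      rw [show 2 * (k + 1) = 2 * k + 1 + 1 by ring]
      rw [List.getElem?_cons_succ, List.getElem?_cons_succ, List.getElem?_cons_succ]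
      exact ih k

lemma mu_get_odd (l : List Bool) (k : ℕ) :
    (mu l)[2 * k + 1]? = (l[k]?).map (fun b => !b) := by
  induction l generalizing k with
  | nil => simp [mu_nil]
  | cons b tl ih =>
    rw [mu_cons2]
    cases k with
    | zero => rfl
    | succ k =>
      rw [show 2 * (k + 1) + 1 = 2 * k + 1 + 1 + 1 by ring]
      rw [List.getElem?_cons_succ, List.getElem?_cons_succ, List.getElem?_cons_succ]
      exact ih k

lemma mu_iter_length (s : ℕ) (l : List Bool) : (mu^[s] l).length = 2 ^ s * l.length := by
  induction s generalizing l with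
  | zero => simp
  | succ s ih =>
    rw [Function.iterate_succ_apply', mu_length, ih, pow_succ]
    ring

/-- value function of a list. -/
def lf (l : List Bool) : ℕ → Bool := fun i => l.getD i false

lemma lf_get? (l : List Bool) (i : ℕ) (h : i < l.length) : l[i]? = some (lf l i) := by
  simp only [lf, List.getD_eq_getElem?_getD,
    List.getElem?_eq_getElem h]
  rfl

lemma mu_iter_get (s : ℕ) (z : List Bool) (p : ℕ) (hp : p < 2 ^ s * z.length) :
    (mu^[s] z)[p]? = some (Dop^[s] (lf z) p) := by
  induction s generalizing p with
  | zero =>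
    simp only [Function.iterate_zero, id, pow_zero, one_mul] at hp ⊢
    exact lf_get? z p hp
  | succ s ih =>
    rw [Function.iterate_succ_apply' mu, Function.iterate_succ_apply' Dop]
    have hlen : (mu^[s] z).length = 2 ^ s * z.length := mu_iter_length s z
    rcases Nat.even_or_odd p with ⟨k, hk⟩ | ⟨k, hk⟩
    · have hp2 : p = 2 * k := by omega
      subst hp2
      rw [mu_get_even, Dop_even]
      apply ih
      rw [pow_succ] at hp
      have : 2 ^ s * 2 * z.length = 2 * (2 ^ s * z.length) := by ring
      omega
    · subst hk
      rw [mu_get_odd, Dop_odd]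
      have hk2 : k < 2 ^ s * z.length := by
        rw [pow_succ] at hp
        have : 2 ^ s * 2 * z.length = 2 * (2 ^ s * z.length) := by ring
        omega
      rw [ih k hk2]
      rfl

lemma lf_pad (R : ℕ) (v : List Bool) :
    lf (List.replicate R false ++ v) = zpad R (lf v) := by
  funext i
  simp only [lf, zpad]
  by_cases h : i < R
  · rw [if_pos h]
    rw [List.getD_append _ _ _ _ (by simpa using h)]
    simp [List.getD_eq_getElem?_getD, List.getElem?_replicate, if_pos h]
  · rw [if_neg h]
    rw [List.getD_append_right _ _ _ _ (by simpa using h)]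
    simp

/-- one construction step at the list level. -/
def stepW (R s t : ℕ) (v : List Bool) : List Bool :=
  (mu^[s] (List.replicate R false ++ v)).drop t

lemma stepW_length (R s t : ℕ) (v : List Bool) :
    (stepW R s t v).length = 2 ^ s * (R + v.length) - t := by
  simp [stepW, mu_iter_length]

lemma stepW_get (R s t : ℕ) (v : List Bool) (p : ℕ)
    (hp : t + p < 2 ^ s * (R + v.length)) :
    (stepW R s t v)[p]? = some (Dop^[s] (zpad R (lf v)) (t + p)) := by
  rw [stepW, List.getElem?_drop, ← lf_pad]
  rw [mu_iter_get]
  simpa using hp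

def GoodL (α : ℝ) (v : List Bool) : Prop :=
  FreeF α (lf v) v.length ∧ NoCrossF α (lf v) v.length ∧ (1 ≤ v.length → lf v 0 = true)

lemma FreeF_congr {α : ℝ} {f f' : ℕ → Bool} {L : ℕ} (h : ∀ p, p < L → f p = f' p)
    (hf : FreeF α f L) : FreeF α f' L := by
  intro i n q hq hle hw hn
  refine hf i n q hq hle (hw.congr fun p hp1 hp2 => ?_) hn
  exact (h p (by omega)).symm

lemma NoCrossF_congr {α : ℝ} {f f' : ℕ → Bool} {L : ℕ} (h : ∀ p, p < L → f p = f' p)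
    (hf : NoCrossF α f L) : NoCrossF α f' L := by
  intro a n q ha hq han hle hw hn
  refine hf a n q ha hq han hle (hw.congr fun p hp1 hp2 => ?_) hn
  simp only [zpad]
  by_cases hc : p < a
  · rw [if_pos hc, if_pos hc]
  · rw [if_neg hc, if_neg hc]
    exact (h (p - a) (by omega)).symm

lemma stepW_good {α : ℝ} (hα : 2 < α) (v : List Bool) (hv : GoodL α v)
    (R s t j : ℕ) (hR : 1 ≤ R) (hs : 2 ≤ s) (ht : t = 4 * j + 3) (htm : tmSeq j = true)
    (hts : t + 3 < 2 ^ s)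
    (hmargin : ((R * 2 ^ s - t : ℕ) : ℝ) + 2 < α * 2 ^ s) :
    GoodL α (stepW R s t v) := by
  obtain ⟨hfree, hnc, hhead⟩ := hv
  obtain ⟨hF, hN, h0⟩ := step hα (lf v) v.length hfree hnc hhead R s t j hR hs ht htm hts hmargin
  have hKpos : 0 < 2 ^ s := pow_pos (by norm_num) s
  have hRK : 2 ^ s ≤ 2 ^ s * (R + v.length) := by
    calc 2 ^ s = 2 ^ s * 1 := by ring
    _ ≤ _ := Nat.mul_le_mul_left _ (by omega)
  have hlen := stepW_length R s t v
  have hagree : ∀ p, p < 2 ^ s * (R + v.length) - t →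
      lf (stepW R s t v) p = Dop^[s] (zpad R (lf v)) (t + p) := by
    intro p hp
    have h1 := stepW_get R s t v p (by omega)
    have h2 := lf_get? (stepW R s t v) p (by omega)
    rw [h1] at h2
    exact (Option.some.inj h2).symm
  refine ⟨?_, ?_, ?_⟩
  · rw [hlen]
    exact FreeF_congr (fun p hp => (hagree p hp).symm) hF
  · rw [hlen]
    exact NoCrossF_congr (fun p hp => (hagree p hp).symm) hN
  · intro _
    rw [hagree 0 (by omega)]
    simpa using h0

lemma goodL_nil {α : ℝ} (hα : 2 < α) : GoodL α [] := by
  refine ⟨?_, ?_, ?_⟩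
  · intro i n q hq hle hw hn
    simp only [List.length_nil] at hle
    have hn0 : n = 0 := by omega
    subst hn0
    have : (0:ℝ) < α * q := by
      have : (1:ℝ) ≤ (q:ℝ) := by exact_mod_cast hq
      nlinarith
    simp at hn
    linarith
  · intro a n q ha hq han hle hw hn
    simp only [List.length_nil] at hle
    omega
  · intro h; simp at h

def loopW (R : ℕ) (S T : ℕ → ℕ) : ℕ → ℕ → List Bool
  | 0, _ => []
  | k+1, m => stepW R (S m) (T m) (loopW R S T k (m+1))

lemma loopW_good {α : ℝ} (hα : 2 < α) (R : ℕ) (hR : 1 ≤ R) (S T J : ℕ → ℕ)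
    (hp : ∀ m, 2 ≤ S m ∧ T m = 4 * J m + 3 ∧ tmSeq (J m) = true ∧ T m + 3 < 2 ^ (S m) ∧
      ((R * 2 ^ (S m) - T m : ℕ) : ℝ) + 2 < α * 2 ^ (S m)) :
    ∀ k m, GoodL α (loopW R S T k m) := by
  intro k
  induction k with
  | zero => intro m; exact goodL_nil hα
  | succ k ih =>
    intro m
    obtain ⟨h1, h2, h3, h4, h5⟩ := hp m
    exact stepW_good hα _ (ih (m+1)) R (S m) (T m) (J m) hR h1 h2 h3 h4 h5

lemma mu_prefix {l l' : List Bool} (h : l <+: l') : mu l <+: mu l' := by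
  obtain ⟨r, rfl⟩ := h
  rw [mu_append]
  exact ⟨mu r, rfl⟩

lemma mu_iter_prefix (s : ℕ) {l l' : List Bool} (h : l <+: l') : mu^[s] l <+: mu^[s] l' := by
  induction s generalizing l l' with
  | zero => simpa using h
  | succ s ih => rw [Function.iterate_succ_apply', Function.iterate_succ_apply']
                 exact mu_prefix (ih h)

lemma drop_prefix_mono (t : ℕ) {l l' : List Bool} (h : l <+: l') : l.drop t <+: l'.drop t := by
  obtain ⟨r, rfl⟩ := h
  rcases le_or_gt t l.length with hc | hc
  · rw [List.drop_append_of_le_length hc]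
    exact ⟨r, rfl⟩
  · rw [List.drop_eq_nil_of_le (by omega)]
    exact List.nil_prefix

lemma stepW_prefix (R s t : ℕ) {v v' : List Bool} (h : v <+: v') :
    stepW R s t v <+: stepW R s t v' := by
  apply drop_prefix_mono
  apply mu_iter_prefix
  obtain ⟨r, rfl⟩ := h
  exact ⟨r, by rw [List.append_assoc]⟩

lemma loopW_prefix (R : ℕ) (S T : ℕ → ℕ) :
    ∀ k m, loopW R S T k m <+: loopW R S T (k + 1) m := by
  intro k
  induction k with
  | zero => intro m; exact List.nil_prefix
  | succ k ih =>
    intro m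
    exact stepW_prefix R (S m) (T m) (ih (m + 1))

lemma mu_iter_append (s : ℕ) (a b : List Bool) :
    mu^[s] (a ++ b) = mu^[s] a ++ mu^[s] b := by
  induction s generalizing a b with
  | zero => simp
  | succ s ih =>
    rw [Function.iterate_succ_apply', Function.iterate_succ_apply',
      Function.iterate_succ_apply', ih, mu_append]

lemma mu_infix {u l : List Bool} (h : u <:+: l) : mu u <:+: mu l := by
  obtain ⟨s₁, s₂, rfl⟩ := h
  rw [mu_append, mu_append]
  exact ⟨mu s₁, mu s₂, rfl⟩

lemma mu_iter_infix (s : ℕ) {u l : List Bool} (h : u <:+: l) : mu^[s] u <:+: mu^[s] l := by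
  induction s generalizing u l with
  | zero => simpa using h
  | succ s ih => rw [Function.iterate_succ_apply', Function.iterate_succ_apply']
                 exact mu_infix (ih h)

lemma infix_stepW (R s t : ℕ) (v : List Bool) (hts : t ≤ R * 2 ^ s) {u : List Bool}
    (h : u <:+: v) : mu^[s] u <:+: stepW R s t v := by
  have hsplit : stepW R s t v =
      (mu^[s] (List.replicate R false)).drop t ++ mu^[s] v := by
    rw [stepW, mu_iter_append, List.drop_append_of_le_length]
    rw [mu_iter_length]
    simpa [Nat.mul_comm] using hts
  rw [hsplit]
  have h1 : mu^[s] u <:+: mu^[s] v := mu_iter_infix s h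
  have h2 : mu^[s] v <:+: (mu^[s] (List.replicate R false)).drop t ++ mu^[s] v :=
    (List.suffix_append _ _).isInfix
  exact h1.trans h2

lemma hasPeriod_mu {u : List Bool} {p : ℕ} (h : HasPeriod u p) : HasPeriod (mu u) (2 * p) := by
  intro i hi
  rw [mu_length] at hi
  rcases Nat.even_or_odd i with ⟨k, hk⟩ | ⟨k, hk⟩
  · have hik : i = 2 * k := by omega
    subst hik
    rw [show 2 * k + 2 * p = 2 * (k + p) by ring, mu_get_even, mu_get_even]
    exact h k (by omega)
  · subst hk
    rw [show 2 * k + 1 + 2 * p = 2 * (k + p) + 1 by ring, mu_get_odd, mu_get_odd]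
    rw [h k (by omega)]

lemma hasPeriod_mu_iter (s : ℕ) {u : List Bool} {p : ℕ} (h : HasPeriod u p) :
    HasPeriod (mu^[s] u) (2 ^ s * p) := by
  induction s generalizing u p with
  | zero => simpa using h
  | succ s ih =>
    rw [Function.iterate_succ_apply']
    have := hasPeriod_mu (ih h)
    rw [show 2 * (2 ^ s * p) = 2 ^ (s+1) * p by ring] at this
    exact this

/-- the prefix power of a step word. -/
lemma stepW_power (R s t : ℕ) (v : List Bool) (hR : 1 ≤ R) (hts : t < 2 ^ s) :
    ∃ u : List Bool, u <+: stepW R s t v ∧ HasPeriod u (2 ^ s) ∧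
      u.length = R * 2 ^ s - t := by
  have hKpos : 0 < 2 ^ s := pow_pos (by norm_num) s
  set c := R * 2 ^ s - t with hc
  have hcW : c ≤ 2 ^ s * (R + v.length) - t := by
    have h1 : R * 2 ^ s ≤ 2 ^ s * (R + v.length) := by
      rw [Nat.mul_comm]
      exact Nat.mul_le_mul_left _ (by omega)
    omega
  have htR : t < R * 2 ^ s := by
    calc t < 2 ^ s := hts
    _ ≤ R * 2 ^ s := by nlinarith
  refine ⟨(stepW R s t v).take c, List.take_prefix _ _, ?_, ?_⟩
  · intro i hi
    rw [List.length_take, stepW_length] at hi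
    have hic : i + 2 ^ s < c := by omega
    rw [List.getElem?_take_of_lt (by omega), List.getElem?_take_of_lt (by omega)]
    rw [stepW_get R s t v i (by omega), stepW_get R s t v (i + 2 ^ s) (by omega)]
    congr 1
    rw [Dop_iter, Dop_iter]
    have hm : (t + (i + 2 ^ s)) % 2 ^ s = (t + i) % 2 ^ s := by
      rw [show t + (i + 2 ^ s) = t + i + 2 ^ s by ring, Nat.add_mod_right]
    have hz1 : (t + i) / 2 ^ s < R := (Nat.div_lt_iff_lt_mul hKpos).2 (by omega)
    have hz2 : (t + (i + 2 ^ s)) / 2 ^ s < R := (Nat.div_lt_iff_lt_mul hKpos).2 (by omega)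
    rw [hm]
    congr 1
    simp only [zpad]
    rw [if_pos hz1, if_pos hz2]
  · rw [List.length_take, stepW_length]
    omega

lemma powerFree_of_goodL {α : ℝ} (hα : 2 < α) (v : List Bool) (hv : GoodL α v) :
    PowerFree α v := by
  intro u p hinf hp hper
  obtain ⟨s₁, s₂, heq⟩ := hinf
  have hlen : s₁.length + u.length + s₂.length = v.length := by
    rw [← heq]; simp only [List.length_append]
  have hval : ∀ j, j < u.length → v[s₁.length + j]? = u[j]? := by
    intro j hj
    rw [← heq, List.append_assoc]
    rw [List.getElem?_append_right (by omega)]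
    rw [show s₁.length + j - s₁.length = j by omega]
    exact List.getElem?_append_left hj
  have hwin : Win (lf v) s₁.length u.length p := by
    intro jg hj hjq
    set j := jg - s₁.length with hjdef
    have hju : j + p < u.length := by omega
    have h1 := hper j hju
    have e1 : v[s₁.length + j]? = u[j]? := hval j (by omega)
    have e2 : v[s₁.length + (j + p)]? = u[j + p]? := hval (j + p) hju
    have g1 := lf_get? v (s₁.length + j) (by omega)
    have g2 := lf_get? v (s₁.length + (j + p)) (by omega)
    have : some (lf v (s₁.length + j)) = some (lf v (s₁.length + (j + p))) := by
      rw [← g1, ← g2, e1, e2, h1]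
    have h2 := Option.some.inj this
    rw [show s₁.length + j = jg by omega] at h2
    rw [show s₁.length + (j + p) = jg + p by omega] at h2
    exact h2
  have hnot := hv.1 s₁.length u.length p hp (by omega) hwin
  have hlt : (u.length : ℝ) < α * p := by
    by_contra hcon
    push_neg at hcon
    exact hnot hcon
  rw [div_lt_iff₀ (by exact_mod_cast hp)]
  exact hlt

theorem increasing_powerFree_words (α : ℝ) (hα : 2 < α) :
    ∃ (β : ℕ → ℚ) (w : ℕ → List Bool),
      StrictMono β ∧
      Filter.Tendsto (fun n => (β n : ℝ)) Filter.atTop (nhds α) ∧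
      (∀ n, w n <+: w (n + 1)) ∧
      (∀ n, PowerFree α (w n)) ∧
      (∀ n, ∀ i ≤ n, ∃ (u : List Bool) (p : ℕ), u <:+: w n ∧ 0 < p ∧
        HasPeriod u p ∧ ((u.length : ℚ) / p = β i)) := by
  have hα0 : (0:ℝ) < α := by linarith
  set R := ⌈α⌉₊ with hRdef
  have hR3 : 3 ≤ R := by
    have : 2 < R := by
      rw [hRdef, Nat.lt_ceil]
      exact_mod_cast hα
    omega
  have hR1 : 1 ≤ R := by omega
  have hRα : α ≤ (R : ℝ) := Nat.le_ceil α
  have hRlt : (R : ℝ) < α + 1 := by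
    rw [hRdef]
    exact Nat.ceil_lt_add_one (by linarith)
  set b : ℝ := max 2 ((R : ℝ) - 1) with hbdef
  have hb2 : (2:ℝ) ≤ b := le_max_left _ _
  have hbR : (R : ℝ) - 1 ≤ b := le_max_right _ _
  have hbα : b < α := max_lt hα (by linarith)
  set γ : ℕ → ℝ := fun m => α - (α - b) / 2 ^ (m + 1) with hγdef
  have hab : (0:ℝ) < α - b := by linarith
  have hγmono : ∀ m, γ m < γ (m + 1) := by
    intro m
    have h1 : (α - b) / 2 ^ (m + 2) < (α - b) / 2 ^ (m + 1) := by
      apply div_lt_div_of_pos_left hab (by positivity)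
      exact pow_lt_pow_right₀ (by norm_num) (by omega)
    simp only [hγdef]
    linarith
  have hγb : ∀ m, b < γ m := by
    intro m
    have h1 : (α - b) / 2 ^ (m + 1) < (α - b) / 1 := by
      apply div_lt_div_of_pos_left hab (by norm_num)
      exact one_lt_pow₀ (by norm_num) (by omega)
    simp only [hγdef]
    simp only [div_one] at h1
    linarith
  have hγα : ∀ m, γ m < α := by
    intro m
    have : (0:ℝ) < (α - b) / 2 ^ (m + 1) := by positivity
    simp only [hγdef]
    linarith
  have hγtend : Filter.Tendsto γ Filter.atTop (nhds α) := by
    have h1 : Filter.Tendsto (fun m : ℕ => (α - b) / 2 ^ (m + 1)) Filter.atTop (nhds 0) := by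
      have h2 : Filter.Tendsto (fun m : ℕ => ((1:ℝ)/2) ^ (m+1)) Filter.atTop (nhds 0) := by
        have := tendsto_pow_atTop_nhds_zero_of_lt_one
          (by norm_num : (0:ℝ) ≤ 1/2) (by norm_num : (1:ℝ)/2 < 1)
        exact this.comp (Filter.tendsto_add_atTop_nat 1)
      have h3 := h2.const_mul (α - b)
      simp only [mul_zero] at h3
      convert h3 using 2 with m
      rw [div_pow, one_pow]
      ring
    have := Filter.Tendsto.const_sub α h1
    simpa using this
  -- choose parameters
  have hex : ∀ m, ∃ s t jj, GoodParam α R (γ m) (γ (m+1)) s t jj := by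
    intro m
    exact exists_good_param R hR1 (γ m) (γ (m+1)) hRα (by linarith [hγb m]) (hγmono m)
      (hγα (m+1))
  choose S T J hgp using hex
  have hgp1 : ∀ m, 2 ≤ S m := fun m => (hgp m).1
  have hgp2 : ∀ m, T m = 4 * J m + 3 := fun m => (hgp m).2.1
  have hgp3 : ∀ m, tmSeq (J m) = true := fun m => (hgp m).2.2.1
  have hgp4 : ∀ m, T m + 3 < 2 ^ (S m) := fun m => (hgp m).2.2.2.1
  have hgp5 : ∀ m, ((R * 2 ^ (S m) - T m : ℕ) : ℝ) + 2 < α * 2 ^ (S m) :=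
    fun m => (hgp m).2.2.2.2.1
  have hgp6 : ∀ m, γ m < ((R * 2 ^ (S m) - T m : ℕ) : ℝ) / 2 ^ (S m) :=
    fun m => (hgp m).2.2.2.2.2.1
  have hgp7 : ∀ m, ((R * 2 ^ (S m) - T m : ℕ) : ℝ) / 2 ^ (S m) < γ (m+1) :=
    fun m => (hgp m).2.2.2.2.2.2
  set β : ℕ → ℚ := fun m => ((R * 2 ^ (S m) - T m : ℕ) : ℚ) / ((2 ^ (S m) : ℕ) : ℚ)
    with hβdef
  have hβreal : ∀ m, ((β m : ℚ) : ℝ) = ((R * 2 ^ (S m) - T m : ℕ) : ℝ) / 2 ^ (S m) := by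
    intro m
    rw [hβdef]
    push_cast
    norm_num
  have hβlo : ∀ m, γ m < ((β m : ℚ) : ℝ) := fun m => by rw [hβreal]; exact hgp6 m
  have hβhi : ∀ m, ((β m : ℚ) : ℝ) < γ (m+1) := fun m => by rw [hβreal]; exact hgp7 m
  set w : ℕ → List Bool := fun n => loopW R S T (n + 1) 0 with hwdef
  have hgood : ∀ k m, GoodL α (loopW R S T k m) := by
    apply loopW_good hα R hR1 S T J
    intro m
    exact ⟨hgp1 m, hgp2 m, hgp3 m, hgp4 m, hgp5 m⟩
  refine ⟨β, w, ?_, ?_, ?_, ?_, ?_⟩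
  · -- StrictMono
    apply strictMono_nat_of_lt_succ
    intro m
    have h1 : ((β m : ℚ) : ℝ) < ((β (m+1) : ℚ) : ℝ) := by
      calc ((β m : ℚ) : ℝ) < γ (m+1) := hβhi m
      _ < ((β (m+1) : ℚ) : ℝ) := hβlo (m+1)
    exact_mod_cast h1
  · -- Tendsto
    have hγtend' : Filter.Tendsto (fun m => γ (m+1)) Filter.atTop (nhds α) :=
      hγtend.comp (Filter.tendsto_add_atTop_nat 1)
    exact tendsto_of_tendsto_of_tendsto_of_le_of_le hγtend hγtend'
      (fun m => le_of_lt (hβlo m)) (fun m => le_of_lt (hβhi m))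
  · -- prefix chain
    intro n
    exact loopW_prefix R S T (n+1) 0
  · -- power-free
    intro n
    exact powerFree_of_goodL hα _ (hgood (n+1) 0)
  · -- powers present
    intro n i hi
    have key : ∀ d, d ≤ i → ∃ (u : List Bool) (p : ℕ),
        u <:+: loopW R S T (n + 1 - i + d) (i - d) ∧ 0 < p ∧ HasPeriod u p ∧
        ((u.length : ℚ) / p = β i) := by
      intro d
      induction d with
      | zero =>
        intro _
        obtain ⟨k, hk⟩ : ∃ k, n + 1 - i = k + 1 := ⟨n - i, by omega⟩
        rw [hk, Nat.add_zero, Nat.sub_zero]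
        have hpw := stepW_power R (S i) (T i) (loopW R S T k (i+1)) hR1 (by
          have := hgp4 i; omega)
        obtain ⟨u, hu1, hu2, hu3⟩ := hpw
        refine ⟨u, 2 ^ (S i), ?_, by positivity, hu2, ?_⟩
        · show u <:+: loopW R S T (k+1) i
          rw [show loopW R S T (k+1) i = stepW R (S i) (T i) (loopW R S T k (i+1)) from rfl]
          exact hu1.isInfix
        · rw [hu3, hβdef]
      | succ d ih =>
        intro hd
        obtain ⟨u, p, hu1, hu2, hu3, hu4⟩ := ih (by omega)
        obtain ⟨m, hm⟩ : ∃ m, i - d = m + 1 := ⟨i - d - 1, by omega⟩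
        have hm' : i - (d + 1) = m := by omega
        refine ⟨mu^[S m] u, 2 ^ (S m) * p, ?_, by positivity, hasPeriod_mu_iter _ hu3, ?_⟩
        · rw [hm']
          have hstep : loopW R S T (n + 1 - i + (d+1)) m =
              stepW R (S m) (T m) (loopW R S T (n + 1 - i + d) (m+1)) := by
            rw [show n + 1 - i + (d+1) = (n + 1 - i + d) + 1 by omega]
            rfl
          rw [hstep]
          apply infix_stepW
          · have h1 := hgp4 m
            have h2 : 2 ^ (S m) ≤ R * 2 ^ (S m) := by nlinarith [pow_pos (by norm_num : (0:ℕ) < 2) (S m)]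
            omega
          · rw [hm] at hu1
            exact hu1
        · rw [mu_iter_length, ← hu4]
          push_cast
          rw [mul_div_mul_left _ _ (by positivity : ((2:ℚ) ^ (S m)) ≠ 0)]
    obtain ⟨u, p, h1, h2, h3, h4⟩ := key i le_rfl
    rw [show n + 1 - i + i = n + 1 by omega, Nat.sub_self] at h1
    exact ⟨u, p, h1, h2, h3, h4⟩
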